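/- arXiv:math/0505596 — 3 statements merged into one kernel-verified Lean document; each statement's English description precedes it below -/
import Mathlib

section
/- Let $(r_i)_{i\ge0}$ be nonnegative reals with $\sum_i r_i = 1$, $r_0 > 0$, and mean $\gamma_1 = \sum_i i\, r_i < 1$. Let $Q_0 > 0$ and define $Q_k = \sum_{i=0}^{k} r_i Q_{k-i+1}$ for $k \ge 0$. Then $\lim_{k\to\infty} Q_k = Q_0/(1-\gamma_1)$. -/
open Filter

private lemma minsum (N j : ℕ) (c : ℝ) :
    ∑ i ∈ Finset.range N, (if i < j then c else 0) = (min j N : ℕ) * c := by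
  induction N with
  | zero => simp
  | succ N ih =>
    rw [Finset.sum_range_succ, ih]
    by_cases h : N < j
    · rw [if_pos h]
      have h1 : min j (N+1) = N + 1 := by omega
      have h2 : min j N = N := by omega
      rw [h1, h2]; push_cast; ring
    · rw [if_neg h]
      have h1 : min j (N+1) = min j N := by omega
      rw [h1, add_zero]

theorem stmt1 (r Q : ℕ → ℝ)
    (hr_nonneg : ∀ i, 0 ≤ r i) (hr_sum : ∑' i, r i = 1) (hr0 : 0 < r 0)
    (hmean_summable : Summable (fun i : ℕ => (i : ℝ) * r i))
    (hmean_lt : ∑' i : ℕ, (i : ℝ) * r i < 1)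
    (hQ0 : 0 < Q 0)
    (hrec : ∀ k, Q k = ∑ i ∈ Finset.range (k + 1), r i * Q (k - i + 1)) :
    Tendsto Q atTop (nhds (Q 0 / (1 - ∑' i : ℕ, (i : ℝ) * r i))) := by
  set γ : ℝ := ∑' i : ℕ, (i : ℝ) * r i with hγdef
  have hsum : Summable r := by
    by_contra h
    rw [tsum_eq_zero_of_not_summable h] at hr_sum
    norm_num at hr_sum
  have hγ0 : 0 ≤ γ := tsum_nonneg fun i => mul_nonneg (Nat.cast_nonneg i) (hr_nonneg i)
  have h1γ : 0 < 1 - γ := by linarith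
  -- tail sums
  set R : ℕ → ℝ := fun i => ∑' j, (if i < j then r j else 0) with hRdef
  have hite_nonneg : ∀ i j : ℕ, 0 ≤ if i < j then r j else 0 := by
    intro i j; split <;> simp [hr_nonneg j]
  have hsummi : ∀ i : ℕ, Summable (fun j => if i < j then r j else 0) := fun i =>
    hsum.of_nonneg_of_le (hite_nonneg i) (fun j => by split <;> simp [hr_nonneg j])
  have hR_nonneg : ∀ i, 0 ≤ R i := fun i => tsum_nonneg (hite_nonneg i)
  -- partial sums of r bounded by 1
  have hpartial : ∀ s : Finset ℕ, ∑ i ∈ s, r i ≤ 1 := fun s => by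
    rw [← hr_sum]; exact Summable.sum_le_tsum s (fun i _ => hr_nonneg i) hsum
  have hr0le : r 0 ≤ 1 := by
    have := hpartial {0}; simpa using this
  -- R i = r (i+1) + R (i+1)
  have hRstep : ∀ i, R i = r (i + 1) + R (i + 1) := by
    intro i
    have h1 : R i - R (i+1) = ∑' j, ((if i < j then r j else 0) - (if i+1 < j then r j else 0)) :=
      (Summable.tsum_sub (hsummi i) (hsummi (i+1))).symm
    have h2 : ∀ j, ((if i < j then r j else 0) - (if i+1 < j then r j else 0))
        = (if j = i + 1 then r (i+1) else 0) := by
      intro j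
      rcases lt_trichotomy j (i+1) with h | h | h
      · rw [if_neg (by omega), if_neg (by omega), if_neg (by omega)]; ring
      · rw [if_pos (by omega), if_neg (by omega), if_pos h]; rw [h]; ring
      · rw [if_pos (by omega), if_pos (by omega), if_neg (by omega)]; ring
    have h3 : (∑' j, (if j = i + 1 then r (i+1) else 0)) = r (i+1) := tsum_ite_eq (i+1) (fun _ => r (i+1))
    have : R i - R (i+1) = r (i+1) := by rw [h1]; rw [tsum_congr h2]; exact h3
    linarith
  -- r 0 + R 0 = 1
  have hr0R0 : r 0 + R 0 = 1 := by
    have h2 : ∀ j, (if j = 0 then r 0 else 0) + (if 0 < j then r j else 0) = r j := by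
      intro j
      rcases Nat.eq_zero_or_pos j with h | h
      · subst h; simp
      · rw [if_neg (by omega), if_pos h]; ring
    have h3 : (∑' j, (if j = (0:ℕ) then r 0 else 0)) = r 0 := tsum_ite_eq 0 (fun _ => r 0)
    calc r 0 + R 0 = ∑' j, ((if j = 0 then r 0 else 0) + (if 0 < j then r j else 0)) := by
          rw [Summable.tsum_add ⟨r 0, hasSum_ite_eq 0 (r 0)⟩ (hsummi 0), h3]
      _ = ∑' j, r j := tsum_congr h2
      _ = 1 := hr_sum
  -- HasSum R γ
  have hRHasSum : HasSum R γ := by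
    rw [hasSum_iff_tendsto_nat_of_nonneg hR_nonneg]
    have heq : ∀ N, ∑ i ∈ Finset.range N, R i = ∑' j, ((min j N : ℕ) : ℝ) * r j := by
      intro N
      rw [hRdef]
      rw [← Summable.tsum_finsetSum (fun i _ => hsummi i)]
      apply tsum_congr
      intro j
      exact minsum N j (r j)
    rw [funext heq]
    apply tendsto_tsum_of_dominated_convergence (f := fun N j => ((min j N : ℕ) : ℝ) * r j)
      (bound := fun j => (j : ℝ) * r j) hmean_summable
    · intro j
      apply Tendsto.congr' (f₁ := fun _ => (j : ℝ) * r j) _ tendsto_const_nhds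
      filter_upwards [eventually_ge_atTop j] with N hN
      congr 2
      omega
    · filter_upwards with N j
      rw [Real.norm_eq_abs, abs_of_nonneg (mul_nonneg (Nat.cast_nonneg _) (hr_nonneg j))]
      exact mul_le_mul_of_nonneg_right (by exact_mod_cast min_le_left j N) (hr_nonneg j)
  -- key identity: Q (n+1) = Q 0 + sum of tail-weighted Q's
  have hkey : ∀ n, Q (n+1) = Q 0 + ∑ i ∈ Finset.range (n+1), R i * Q (n+1-i) := by
    intro n
    induction n with
    | zero =>
      have h0 : Q 0 = r 0 * Q 1 := by simpa using hrec 0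
      norm_num [Finset.sum_range_one]
      rw [h0]
      linear_combination (-(Q 1)) * hr0R0
    | succ n ih =>
      have hA : Q (n+1) = (∑ i ∈ Finset.range (n+1), r (i+1) * Q (n+1-i)) + r 0 * Q (n+2) := by
        rw [hrec (n+1), Finset.sum_range_succ' (fun i => r i * Q (n+1-i+1)) (n+1)]
        congr 1
        · exact Finset.sum_congr rfl fun i hi => by
            simp only [Finset.mem_range] at hi
            congr 2
            omega
      have hB : ∑ i ∈ Finset.range (n+2), R i * Q (n+2-i)
          = (∑ i ∈ Finset.range (n+1), R (i+1) * Q (n+1-i)) + R 0 * Q (n+2) := by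
        rw [Finset.sum_range_succ' (fun i => R i * Q (n+2-i)) (n+1)]
        congr 1
        · exact Finset.sum_congr rfl fun i hi => by
            simp only [Finset.mem_range] at hi
            congr 2
            omega
      have hC : ∑ i ∈ Finset.range (n+1), R (i+1) * Q (n+1-i)
          = (∑ i ∈ Finset.range (n+1), R i * Q (n+1-i))
            - ∑ i ∈ Finset.range (n+1), r (i+1) * Q (n+1-i) := by
        rw [← Finset.sum_sub_distrib]
        exact Finset.sum_congr rfl fun i _ => by rw [hRstep i]; ring
      have ih' : ∑ i ∈ Finset.range (n+1), R i * Q (n+1-i) = Q (n+1) - Q 0 := by linarith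
      have hD : ∑ i ∈ Finset.range (n+1), r (i+1) * Q (n+1-i) = Q (n+1) - r 0 * Q (n+2) := by
        linarith
      rw [hB, hC, ih', hD]
      linear_combination (-(Q (n+2))) * hr0R0
  -- monotonicity
  have hmono_step : ∀ k, Q k ≤ Q (k+1) := by
    intro k
    induction k using Nat.strong_induction_on with
    | _ k ih =>
      have hchain : ∀ d j, j + d ≤ k → Q j ≤ Q (j + d) := by
        intro d
        induction d with
        | zero => intro j _; simp
        | succ d ihd =>
          intro j hj
          have h1 : Q j ≤ Q (j + d) := ihd j (by omega)
          have h2 : Q (j + d) ≤ Q (j + d + 1) := ih (j + d) (by omega)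
          calc Q j ≤ Q (j + d) := h1
            _ ≤ Q (j + (d+1)) := by rw [← add_assoc]; exact h2
      have hle : ∀ j, j ≤ k → Q j ≤ Q k := by
        intro j hj
        have := hchain (k - j) j (by omega)
        rwa [show j + (k - j) = k by omega] at this
      have hposk : 0 < Q k := lt_of_lt_of_le hQ0 (by simpa using hchain k 0 (by omega))
      have hA : Q k = (∑ i ∈ Finset.range k, r (i+1) * Q (k-i)) + r 0 * Q (k+1) := by
        rw [hrec k, Finset.sum_range_succ' (fun i => r i * Q (k-i+1)) k]
        congr 1
        · exact Finset.sum_congr rfl fun i hi => by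
            simp only [Finset.mem_range] at hi
            congr 2
            omega
      set s : ℝ := ∑ i ∈ Finset.range k, r (i+1) with hs
      have hs1 : s + r 0 ≤ 1 := by
        have : s + r 0 = ∑ i ∈ Finset.range (k+1), r i := by
          rw [Finset.sum_range_succ' r k]
        rw [this]
        exact hpartial _
      have hsum_le : ∑ i ∈ Finset.range k, r (i+1) * Q (k-i) ≤ s * Q k := by
        rw [hs, Finset.sum_mul]
        apply Finset.sum_le_sum
        intro i hi
        simp only [Finset.mem_range] at hi
        exact mul_le_mul_of_nonneg_left (hle (k - i) (by omega)) (hr_nonneg (i+1))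
      have e1 : (1 - s) * Q k ≤ r 0 * Q (k+1) := by nlinarith
      have e2 : r 0 * Q k ≤ (1 - s) * Q k :=
        mul_le_mul_of_nonneg_right (by linarith) hposk.le
      have e3 : r 0 * Q k ≤ r 0 * Q (k+1) := e2.trans e1
      exact le_of_mul_le_mul_left e3 hr0
  have hmono : Monotone Q := monotone_nat_of_le_succ hmono_step
  have hQpos : ∀ n, 0 < Q n := fun n => lt_of_lt_of_le hQ0 (hmono (Nat.zero_le n))
  -- boundedness
  set B : ℝ := Q 0 / (1 - γ) with hB
  have hbound : ∀ n, Q n ≤ B := by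
    intro n
    cases n with
    | zero =>
      rw [hB, le_div_iff₀ h1γ]
      nlinarith
    | succ n =>
      have h1 : ∑ i ∈ Finset.range (n+1), R i * Q (n+1-i)
          ≤ (∑ i ∈ Finset.range (n+1), R i) * Q (n+1) := by
        rw [Finset.sum_mul]
        apply Finset.sum_le_sum
        intro i hi
        exact mul_le_mul_of_nonneg_left (hmono (by omega)) (hR_nonneg i)
      have h2 : ∑ i ∈ Finset.range (n+1), R i ≤ γ := by
        rw [← hRHasSum.tsum_eq]
        exact Summable.sum_le_tsum _ (fun i _ => hR_nonneg i) hRHasSum.summable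
      have h3 : Q (n+1) ≤ Q 0 + γ * Q (n+1) := by
        have := hkey n
        nlinarith [hQpos (n+1)]
      rw [hB, le_div_iff₀ h1γ]
      nlinarith
  -- convergence
  have hbdd : BddAbove (Set.range Q) := ⟨B, by rintro x ⟨n, rfl⟩; exact hbound n⟩
  set L : ℝ := ⨆ n, Q n with hL
  have htend : Tendsto Q atTop (nhds L) := tendsto_atTop_ciSup hmono hbdd
  -- limit of the identity sums
  set G : ℕ → ℕ → ℝ := fun n i => if i ≤ n then R i * Q (n+1-i) else 0 with hG
  have hGsum : ∀ n, ∑' i, G n i = ∑ i ∈ Finset.range (n+1), R i * Q (n+1-i) := by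
    intro n
    rw [tsum_eq_sum (s := Finset.range (n+1))
      (fun i hi => by
        simp only [Finset.mem_range, not_lt] at hi
        exact if_neg (by omega))]
    exact Finset.sum_congr rfl fun i hi => by
      simp only [Finset.mem_range] at hi
      exact if_pos (by omega)
  have htends : Tendsto (fun n => ∑' i, G n i) atTop (nhds (∑' i, R i * L)) := by
    apply tendsto_tsum_of_dominated_convergence (bound := fun i => R i * B)
      (hRHasSum.summable.mul_right B)
    · intro i
      have h1 : Tendsto (fun n : ℕ => n + 1 - i) atTop atTop :=
        tendsto_atTop_mono (fun n => by omega : ∀ n : ℕ, n - i ≤ n + 1 - i)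
          (tendsto_sub_atTop_nat i)
      have h2 : Tendsto (fun n => Q (n + 1 - i)) atTop (nhds L) := htend.comp h1
      apply Tendsto.congr' _ (h2.const_mul (R i))
      filter_upwards [eventually_ge_atTop i] with n hn
      exact (if_pos hn).symm
    · filter_upwards with n i
      rw [hG]
      dsimp only
      split
      · rw [Real.norm_eq_abs, abs_of_nonneg (mul_nonneg (hR_nonneg i) (hQpos _).le)]
        exact mul_le_mul_of_nonneg_left (hbound _) (hR_nonneg i)
      · rw [norm_zero]
        exact mul_nonneg (hR_nonneg i) (le_trans (hQpos 0).le (hbound 0))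
  have htsumRL : ∑' i, R i * L = γ * L := by
    rw [tsum_mul_right, hRHasSum.tsum_eq]
  have hQl : Tendsto (fun n => Q (n+1)) atTop (nhds L) :=
    htend.comp (tendsto_add_atTop_nat 1)
  have hQr : Tendsto (fun n => Q (n+1)) atTop (nhds (Q 0 + γ * L)) := by
    apply Tendsto.congr _ (tendsto_const_nhds.add (htsumRL ▸ htends))
    intro n
    rw [hGsum n, ← hkey n]
  have hLeq : L = Q 0 + γ * L := tendsto_nhds_unique hQl hQr
  have hLval : Q 0 / (1 - γ) = L := by
    rw [div_eq_iff h1γ.ne']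
    linear_combination -hLeq
  rw [hB, hLval]
  exact htend
end

section
/- Let $(\mathbf{E}T_K)_{K\ge0}$ satisfy the recurrence $\mathbf{E}T_K = \sum_{j=0}^{K} \pi_j\, \mathbf{E}T_{K-j+1}$ with $\mathbf{E}T_0 = b$, where $\pi_j = \int_0^\infty e^{-\lambda x} \frac{(\lambda x)^j}{j!} dB(x)$, $b$ is the mean of $B$, and $\varrho = \lambda b < 1$. Then $\lim_{K\to\infty} \mathbf{E}T_K = \frac{b}{1-\varrho}$. -/
open MeasureTheory Filter

noncomputable def cseq (p r : ℕ → ℝ) : ℕ → ℝ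
  | n => (p n + ∑ j : Fin n, r (j.1 + 1) * cseq p r (n - 1 - j.1)) / p 0
  decreasing_by have := j.2; omega

lemma cseq_def (p r : ℕ → ℝ) (n : ℕ) :
    cseq p r n = (p n + ∑ j ∈ Finset.range n, r (j + 1) * cseq p r (n - 1 - j)) / p 0 := by
  rw [cseq, Finset.sum_range fun j => r (j + 1) * cseq p r (n - 1 - j)]

lemma hasSum_exp' (t : ℝ) : HasSum (fun i : ℕ => t ^ i / (Nat.factorial i)) (Real.exp t) := by
  rw [Real.exp_eq_exp_ℝ]; exact NormedSpace.expSeries_div_hasSum_exp t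

lemma hasSum_mul_exp (t : ℝ) :
    HasSum (fun i : ℕ => (i : ℝ) * t ^ i / (Nat.factorial i)) (t * Real.exp t) := by
  have h2 := (hasSum_exp' t).mul_left t
  have h3 : (fun j : ℕ => ((j + 1 : ℕ) : ℝ) * t ^ (j + 1) / (Nat.factorial (j + 1)))
      = fun j : ℕ => t * (t ^ j / (Nat.factorial j)) := by
    funext j
    have hj : (Nat.factorial j : ℝ) ≠ 0 := by positivity
    rw [Nat.factorial_succ]
    push_cast
    field_simp
    ring
  have h4 : HasSum (fun j : ℕ => ((j + 1 : ℕ) : ℝ) * t ^ (j + 1) / (Nat.factorial (j + 1)))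
      (t * Real.exp t) := by rw [h3]; exact h2
  have h5 := (hasSum_nat_add_iff (f := fun i : ℕ => (i : ℝ) * t ^ i / (Nat.factorial i)) 1).mp h4
  simpa using h5

noncomputable def gfun (N : ℕ) (t : ℝ) : ℝ :=
  ∑ j ∈ Finset.range N,
    (1 - Real.exp (-t) * ∑ i ∈ Finset.range (j + 1), t ^ i / (Nat.factorial i))

lemma gfun_term_nonneg {t : ℝ} (ht : 0 ≤ t) (j : ℕ) :
    0 ≤ 1 - Real.exp (-t) * ∑ i ∈ Finset.range (j + 1), t ^ i / (Nat.factorial i) := by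
  have h1 : Real.exp (-t) * ∑ i ∈ Finset.range (j + 1), t ^ i / (Nat.factorial i)
      ≤ Real.exp (-t) * Real.exp t :=
    mul_le_mul_of_nonneg_left (Real.sum_le_exp_of_nonneg ht _) (Real.exp_nonneg _)
  rw [← Real.exp_add, neg_add_cancel, Real.exp_zero] at h1
  linarith

lemma gfun_nonneg {t : ℝ} (ht : 0 ≤ t) (N : ℕ) : 0 ≤ gfun N t :=
  Finset.sum_nonneg fun j _ => gfun_term_nonneg ht j

lemma gfun_eq (N : ℕ) (t : ℝ) :
    gfun N t = N - Real.exp (-t) *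
      ∑ i ∈ Finset.range N, ((N : ℝ) - i) * t ^ i / (Nat.factorial i) := by
  induction N with
  | zero => simp [gfun]
  | succ N ih =>
    have key : ∑ i ∈ Finset.range (N + 1), (((N : ℝ) + 1) - i) * t ^ i / (Nat.factorial i)
        = (∑ i ∈ Finset.range N, ((N : ℝ) - i) * t ^ i / (Nat.factorial i))
          + ∑ i ∈ Finset.range (N + 1), t ^ i / (Nat.factorial i) := by
      calc ∑ i ∈ Finset.range (N + 1), (((N : ℝ) + 1) - i) * t ^ i / (Nat.factorial i)
          = ∑ i ∈ Finset.range (N + 1),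
              (((N : ℝ) - i) * t ^ i / (Nat.factorial i) + t ^ i / (Nat.factorial i)) :=
            Finset.sum_congr rfl fun i _ => by ring
        _ = (∑ i ∈ Finset.range (N + 1), ((N : ℝ) - i) * t ^ i / (Nat.factorial i))
              + ∑ i ∈ Finset.range (N + 1), t ^ i / (Nat.factorial i) :=
            Finset.sum_add_distrib
        _ = _ := by
            rw [Finset.sum_range_succ (f := fun i => ((N : ℝ) - i) * t ^ i / (Nat.factorial i))]
            simp
    rw [gfun, Finset.sum_range_succ, ← gfun, ih]
    push_cast
    rw [key]
    ring

lemma gfun_gap {t : ℝ} (ht : 0 ≤ t) (N : ℕ) :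
    0 ≤ t - gfun N t ∧
    t - gfun N t ≤ ∑' m : ℕ, ((m + N : ℕ) : ℝ) * t ^ (m + N) / (Nat.factorial (m + N)) := by
  set a : ℕ → ℝ := fun i => ((i : ℝ) - N) * t ^ i / (Nat.factorial i) with ha
  have hsa : HasSum a (t * Real.exp t - N * Real.exp t) := by
    have := (hasSum_mul_exp t).sub ((hasSum_exp' t).mul_left (N : ℝ))
    convert this using 2 with i
    show ((i : ℝ) - N) * t ^ i / (Nat.factorial i) = _
    ring
    rfl
  have hsplit := Summable.sum_add_tsum_nat_add (f := a) N hsa.summable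
  rw [hsa.tsum_eq] at hsplit
  have hfin : ∑ i ∈ Finset.range N, a i
      = -∑ i ∈ Finset.range N, ((N : ℝ) - i) * t ^ i / (Nat.factorial i) := by
    rw [← Finset.sum_neg_distrib]
    exact Finset.sum_congr rfl fun i _ => by simp only [ha]; ring
  have htail : ∑' m : ℕ, a (m + N)
      = t * Real.exp t - N * Real.exp t
        + ∑ i ∈ Finset.range N, ((N : ℝ) - i) * t ^ i / (Nat.factorial i) := by
    rw [hfin] at hsplit; linarith
  have hgap : t - gfun N t = Real.exp (-t) * ∑' m : ℕ, a (m + N) := by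
    rw [gfun_eq, htail]
    have he : Real.exp (-t) * Real.exp t = 1 := by
      rw [← Real.exp_add, neg_add_cancel, Real.exp_zero]
    ring_nf
    nlinarith [he]
  have hanonneg : ∀ m : ℕ, 0 ≤ a (m + N) := by
    intro m
    simp only [ha]
    have : (0:ℝ) ≤ ((m + N : ℕ) : ℝ) - N := by push_cast; linarith [Nat.cast_nonneg (α := ℝ) m]
    positivity
  constructor
  · rw [hgap]
    exact mul_nonneg (Real.exp_nonneg _) (tsum_nonneg hanonneg)
  · rw [hgap]
    have hle1 : Real.exp (-t) ≤ 1 := Real.exp_le_one_iff.mpr (by linarith)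
    have hwsum : Summable (fun m : ℕ => ((m + N : ℕ) : ℝ) * t ^ (m + N) / (Nat.factorial (m + N))) :=
      ((summable_nat_add_iff N).mpr (hasSum_mul_exp t).summable)
    have hasum : Summable fun m : ℕ => a (m + N) :=
      (summable_nat_add_iff N).mpr hsa.summable
    have hterm : ∀ m : ℕ, a (m + N) ≤ ((m + N : ℕ) : ℝ) * t ^ (m + N) / (Nat.factorial (m + N)) := by
      intro m
      simp only [ha]
      have h1 : ((m + N : ℕ) : ℝ) - N ≤ ((m + N : ℕ) : ℝ) := by
        linarith [Nat.cast_nonneg (α := ℝ) N]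
      gcongr
    calc Real.exp (-t) * ∑' m : ℕ, a (m + N) ≤ 1 * ∑' m : ℕ, a (m + N) :=
          mul_le_mul_of_nonneg_right hle1 (tsum_nonneg hanonneg)
      _ = ∑' m : ℕ, a (m + N) := one_mul _
      _ ≤ _ := Summable.tsum_le_tsum hterm hasum hwsum

lemma gfun_tendsto {t : ℝ} (ht : 0 ≤ t) :
    Tendsto (fun N => gfun N t) atTop (nhds t) := by
  have htail : Tendsto
      (fun N => ∑' m : ℕ, ((m + N : ℕ) : ℝ) * t ^ (m + N) / (Nat.factorial (m + N)))
      atTop (nhds 0) := by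
    exact_mod_cast tendsto_sum_nat_add (fun i : ℕ => (i : ℝ) * t ^ i / (Nat.factorial i))
  have hsq : Tendsto (fun N => t - gfun N t) atTop (nhds 0) :=
    squeeze_zero (fun N => (gfun_gap ht N).1) (fun N => (gfun_gap ht N).2) htail
  have := hsq.const_sub t
  simpa using this

lemma sum_swap_conv (g : ℕ → ℕ → ℝ) (N : ℕ) :
    ∑ n ∈ Finset.range (N + 1), ∑ j ∈ Finset.range (n + 1), g j (n - j)
      = ∑ j ∈ Finset.range (N + 1), ∑ m ∈ Finset.range (N - j + 1), g j m := by
  induction N with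
  | zero => simp
  | succ N ih =>
    rw [Finset.sum_range_succ
      (f := fun n => ∑ j ∈ Finset.range (n + 1), g j (n - j)), ih]
    rw [Finset.sum_range_succ
      (f := fun j => ∑ m ∈ Finset.range (N + 1 - j + 1), g j m)]
    have h1 : ∀ j ∈ Finset.range (N + 1), ∑ m ∈ Finset.range (N + 1 - j + 1), g j m
        = ∑ m ∈ Finset.range (N - j + 1), g j m + g j (N + 1 - j) := by
      intro j hj
      have hj' : j ≤ N := by simpa [Nat.lt_succ_iff] using hj
      have : N + 1 - j + 1 = (N - j + 1) + 1 := by omega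
      rw [this, Finset.sum_range_succ]
      congr 2
      omega
    rw [Finset.sum_congr rfl h1, Finset.sum_add_distrib]
    have h2 : ∑ j ∈ Finset.range (N + 1 + 1), g j (N + 1 - j)
        = ∑ j ∈ Finset.range (N + 1), g j (N + 1 - j) + g (N + 1) 0 := by
      rw [Finset.sum_range_succ]
      congr 2
      omega
    have h3 : N + 1 - (N + 1) + 1 = 1 := by omega
    rw [h2, h3, Finset.sum_range_one]
    ring

theorem stmt10 (B : Measure ℝ) [IsProbabilityMeasure B]
    (hB_nonneg : ∀ᵐ x ∂B, 0 ≤ x)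
    (hInt : Integrable (fun x => x) B)
    (lam b : ℝ) (hlam : 0 < lam) (hb : b = ∫ x, x ∂B) (hbpos : 0 < b)
    (hload : lam * b < 1)
    (ET : ℕ → ℝ) (hET0 : ET 0 = b)
    (hrec : ∀ K, ET K = ∑ j ∈ Finset.range (K + 1),
      (∫ x, Real.exp (-lam * x) * (lam * x) ^ j / (Nat.factorial j) ∂B) * ET (K - j + 1)) :
    Tendsto ET atTop (nhds (b / (1 - lam * b))) := by
  classical
  set pf : ℕ → ℝ → ℝ := fun j x => Real.exp (-lam * x) * (lam * x) ^ j / (Nat.factorial j)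
    with hpf
  set q : ℕ → ℝ := fun j => ∫ x, pf j x ∂B with hq
  have hrec' : ∀ K, ET K = ∑ j ∈ Finset.range (K + 1), q j * ET (K - j + 1) := hrec
  -- basic facts on pf
  have hpf_cont : ∀ j, Continuous (pf j) := by
    intro j
    apply Continuous.div_const
    exact (Real.continuous_exp.comp (continuous_const.mul continuous_id)).mul
      ((continuous_const.mul continuous_id).pow j)
  have hpf_nonneg : ∀ j x, 0 ≤ x → 0 ≤ pf j x := by
    intro j x hx
    have : 0 ≤ lam * x := mul_nonneg hlam.le hx
    simp only [hpf]
    positivity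
  have hpf_le_one : ∀ j x, 0 ≤ x → pf j x ≤ 1 := by
    intro j x hx
    have ht : 0 ≤ lam * x := mul_nonneg hlam.le hx
    have h1 : (lam * x) ^ j / (Nat.factorial j) ≤ Real.exp (lam * x) := by
      calc (lam * x) ^ j / (Nat.factorial j)
          ≤ ∑ i ∈ Finset.range (j + 1), (lam * x) ^ i / (Nat.factorial i) := by
            apply Finset.single_le_sum (f := fun i => (lam * x) ^ i / (Nat.factorial i))
              (fun i _ => by positivity) (Finset.self_mem_range_succ j)
        _ ≤ Real.exp (lam * x) := Real.sum_le_exp_of_nonneg ht _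
    have h2 : Real.exp (-lam * x) * ((lam * x) ^ j / (Nat.factorial j))
        ≤ Real.exp (-lam * x) * Real.exp (lam * x) :=
      mul_le_mul_of_nonneg_left h1 (Real.exp_nonneg _)
    rw [← Real.exp_add] at h2
    simp only [hpf]
    rw [mul_div_assoc]
    calc Real.exp (-lam * x) * ((lam * x) ^ j / (Nat.factorial j))
        ≤ Real.exp (-lam * x + lam * x) := h2
      _ = 1 := by rw [neg_mul, neg_add_cancel, Real.exp_zero]
  have hpf_int : ∀ j, Integrable (pf j) B := by
    intro j
    apply Integrable.mono' (integrable_const (1 : ℝ)) (hpf_cont j).aestronglyMeasurable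
    filter_upwards [hB_nonneg] with x hx
    rw [Real.norm_eq_abs, abs_of_nonneg (hpf_nonneg j x hx)]
    exact hpf_le_one j x hx
  have hq_nonneg : ∀ j, 0 ≤ q j := by
    intro j
    apply integral_nonneg_of_ae
    filter_upwards [hB_nonneg] with x hx using hpf_nonneg j x hx
  have hq0_pos : 0 < q 0 := by
    rw [hq]
    rw [integral_pos_iff_support_of_nonneg_ae ?_ (hpf_int 0)]
    · have : Function.support (pf 0) = Set.univ := by
        ext x
        simp only [Function.mem_support, Set.mem_univ, iff_true, hpf]
        simp [Real.exp_ne_zero]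
      rw [this]
      simp
    · filter_upwards [hB_nonneg] with x hx using hpf_nonneg 0 x hx
  -- the tail sequence
  set r : ℕ → ℝ := fun j => 1 - ∑ i ∈ Finset.range (j + 1), q i with hr
  have hsum_int : ∀ m, Integrable (fun x => ∑ i ∈ Finset.range m, pf i x) B := fun m =>
    integrable_finset_sum _ fun i _ => hpf_int i
  have hr_int_eq : ∀ j, r j = ∫ x, (1 - ∑ i ∈ Finset.range (j + 1), pf i x) ∂B := by
    intro j
    rw [integral_sub (integrable_const 1) (hsum_int (j + 1)),
      integral_finset_sum _ fun i _ => hpf_int i]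
    simp [hr, hq]
  have hr_nonneg : ∀ j, 0 ≤ r j := by
    intro j
    rw [hr_int_eq j]
    apply integral_nonneg_of_ae
    filter_upwards [hB_nonneg] with x hx
    have ht : 0 ≤ lam * x := mul_nonneg hlam.le hx
    have h1 : ∑ i ∈ Finset.range (j + 1), pf i x
        = Real.exp (-(lam * x)) * ∑ i ∈ Finset.range (j + 1), (lam * x) ^ i / (Nat.factorial i) := by
      rw [Finset.mul_sum]
      exact Finset.sum_congr rfl fun i _ => by rw [hpf]; simp only; rw [neg_mul, mul_div_assoc]
    rw [h1]
    exact gfun_term_nonneg ht j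
  -- partial sums of r as integrals of gfun
  have hgfun_pf : ∀ N x, gfun N (lam * x)
      = ∑ j ∈ Finset.range N, (1 - ∑ i ∈ Finset.range (j + 1), pf i x) := by
    intro N x
    unfold gfun
    apply Finset.sum_congr rfl
    intro j _
    congr 1
    rw [Finset.mul_sum]
    exact Finset.sum_congr rfl fun i _ => by rw [hpf]; simp only; rw [neg_mul, mul_div_assoc]
  have hgf_int : ∀ N, Integrable (fun x => gfun N (lam * x)) B := by
    intro N
    have : (fun x => gfun N (lam * x))
        = fun x => ∑ j ∈ Finset.range N, (1 - ∑ i ∈ Finset.range (j + 1), pf i x) := by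
      funext x; exact hgfun_pf N x
    rw [this]
    exact integrable_finset_sum _ fun j _ => (integrable_const 1).sub (hsum_int (j + 1))
  have hr_sum_eq : ∀ N, ∑ j ∈ Finset.range N, r j = ∫ x, gfun N (lam * x) ∂B := by
    intro N
    have h1 : ∑ j ∈ Finset.range N, r j
        = ∑ j ∈ Finset.range N, ∫ x, (1 - ∑ i ∈ Finset.range (j + 1), pf i x) ∂B :=
      Finset.sum_congr rfl fun j _ => hr_int_eq j
    rw [h1]
    have h2 : ∫ x, gfun N (lam * x) ∂B
        = ∫ x, ∑ j ∈ Finset.range N, (1 - ∑ i ∈ Finset.range (j + 1), pf i x) ∂B :=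
      integral_congr_ae (Filter.Eventually.of_forall fun x => hgfun_pf N x)
    rw [h2]
    exact (integral_finset_sum (μ := B) (Finset.range N)
      (f := fun j x => 1 - ∑ i ∈ Finset.range (j + 1), pf i x)
      (fun j _ => (integrable_const (1:ℝ)).sub (hsum_int (j + 1)))).symm
  have hlamx_int : Integrable (fun x => lam * x) B := hInt.const_mul lam
  have hlamb : ∫ x, lam * x ∂B = lam * b := by
    rw [integral_const_mul, ← hb]
  have hr_sum_le : ∀ N, ∑ j ∈ Finset.range N, r j ≤ lam * b := by
    intro N
    rw [hr_sum_eq N, ← hlamb]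
    apply integral_mono_ae (hgf_int N) hlamx_int
    filter_upwards [hB_nonneg] with x hx
    have := (gfun_gap (mul_nonneg hlam.le hx) N).1
    linarith
  have hr_tend : Filter.Tendsto (fun N => ∑ j ∈ Finset.range N, r j)
      Filter.atTop (nhds (lam * b)) := by
    have h1 : Filter.Tendsto (fun N => ∫ x, gfun N (lam * x) ∂B)
        Filter.atTop (nhds (∫ x, lam * x ∂B)) := by
      apply tendsto_integral_of_dominated_convergence (fun x => lam * x)
        (fun N => (hgf_int N).aestronglyMeasurable) hlamx_int
      · intro N
        filter_upwards [hB_nonneg] with x hx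
        have ht : 0 ≤ lam * x := mul_nonneg hlam.le hx
        have hpos := gfun_nonneg ht N
        have hle := (gfun_gap ht N).1
        rw [Real.norm_eq_abs, abs_of_nonneg hpos]
        linarith
      · filter_upwards [hB_nonneg] with x hx
        exact gfun_tendsto (mul_nonneg hlam.le hx)
    rw [hlamb] at h1
    apply h1.congr
    intro N
    exact (hr_sum_eq N).symm
  have hr_summable : Summable r :=
    summable_of_sum_range_le hr_nonneg hr_sum_le
  have htsum_r : ∑' j, r j = lam * b :=
    tendsto_nhds_unique hr_summable.hasSum.tendsto_sum_nat hr_tend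
  have hr_to0 : Filter.Tendsto r Filter.atTop (nhds 0) := hr_summable.tendsto_atTop_zero
  -- the sequence c and its partial sums C
  set c : ℕ → ℝ := cseq q r with hc
  have hc0 : c 0 = 1 := by
    rw [hc, cseq_def]
    simp [div_self hq0_pos.ne']
  have hc_nonneg : ∀ n, 0 ≤ c n := by
    intro n
    induction n using Nat.strong_induction_on with
    | _ n ih =>
      rw [hc, cseq_def]
      apply div_nonneg _ hq0_pos.le
      apply add_nonneg (hq_nonneg n)
      apply Finset.sum_nonneg
      intro j hj
      rw [Finset.mem_range] at hj
      exact mul_nonneg (hr_nonneg _) (ih _ (by omega))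
  have hI1 : ∀ n, c n = q n + ∑ j ∈ Finset.range (n + 1), r j * c (n - j) := by
    intro n
    have hmul : q 0 * c n = q n + ∑ j ∈ Finset.range n, r (j + 1) * c (n - 1 - j) := by
      rw [hc, cseq_def, mul_div_cancel₀ _ hq0_pos.ne']
    have hr0 : r 0 = 1 - q 0 := by rw [hr]; simp
    rw [Finset.sum_range_succ' (fun j => r j * c (n - j)) n]
    have hcongr : ∑ j ∈ Finset.range n, r (j + 1) * c (n - (j + 1))
        = ∑ j ∈ Finset.range n, r (j + 1) * c (n - 1 - j) :=
      Finset.sum_congr rfl fun j _ => by congr 2; omega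
    rw [hcongr, Nat.sub_zero, hr0]
    linarith [hmul]
  set C : ℕ → ℝ := fun N => ∑ n ∈ Finset.range (N + 1), c n with hC
  have hC_mono : Monotone C := by
    apply monotone_nat_of_le_succ
    intro N
    rw [hC]
    simp only
    rw [Finset.sum_range_succ (n := N + 1)]
    have := hc_nonneg (N + 1)
    linarith
  have hC0 : C 0 = 1 := by rw [hC]; simp [hc0]
  have hC_nonneg : ∀ N, 0 ≤ C N := fun N =>
    Finset.sum_nonneg fun n _ => hc_nonneg n
  have hCsucc : ∀ m, C (m + 1) = C m + c (m + 1) := by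
    intro m
    show ∑ n ∈ Finset.range (m + 1 + 1), c n = (∑ n ∈ Finset.range (m + 1), c n) + c (m + 1)
    exact Finset.sum_range_succ c (m + 1)
  have hC1 : C 1 = 1 + c 1 := by
    have h := hCsucc 0
    rw [hC0] at h
    exact h
  have hG4 : ∀ N, C N = (∑ i ∈ Finset.range (N + 1), q i)
      + ∑ j ∈ Finset.range (N + 1), r j * C (N - j) := by
    intro N
    have h1 : C N = ∑ n ∈ Finset.range (N + 1),
        (q n + ∑ j ∈ Finset.range (n + 1), r j * c (n - j)) := by
      rw [hC]
      exact Finset.sum_congr rfl fun n _ => hI1 n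
    rw [h1, Finset.sum_add_distrib]
    congr 1
    rw [sum_swap_conv (fun j m => r j * c m) N]
    apply Finset.sum_congr rfl
    intro j _
    rw [hC, Finset.mul_sum]
  have hone : (0:ℝ) < 1 - lam * b := by linarith
  have hC_le : ∀ N, C N ≤ 1 / (1 - lam * b) := by
    intro N
    have hq_le : ∑ i ∈ Finset.range (N + 1), q i ≤ 1 := by
      have := hr_nonneg N
      rw [hr] at this
      simp only at this
      linarith
    have hS_le : ∑ j ∈ Finset.range (N + 1), r j * C (N - j) ≤ (lam * b) * C N := by
      calc ∑ j ∈ Finset.range (N + 1), r j * C (N - j)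
          ≤ ∑ j ∈ Finset.range (N + 1), r j * C N := by
            apply Finset.sum_le_sum
            intro j _
            exact mul_le_mul_of_nonneg_left (hC_mono (Nat.sub_le N j)) (hr_nonneg j)
        _ = (∑ j ∈ Finset.range (N + 1), r j) * C N := by rw [Finset.sum_mul]
        _ ≤ (lam * b) * C N :=
            mul_le_mul_of_nonneg_right (hr_sum_le (N + 1)) (hC_nonneg N)
    have hCN := hG4 N
    rw [le_div_iff₀ hone]
    nlinarith [hC_nonneg N]
  have hbdd : BddAbove (Set.range C) := by
    refine ⟨1 / (1 - lam * b), ?_⟩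
    rintro _ ⟨N, rfl⟩
    exact hC_le N
  set L : ℝ := ⨆ N, C N with hL
  have hCL : Filter.Tendsto C Filter.atTop (nhds L) := tendsto_atTop_ciSup hC_mono hbdd
  have hS_tend : Filter.Tendsto (fun N => ∑ j ∈ Finset.range (N + 1), r j * C (N - j))
      Filter.atTop (nhds ((lam * b) * L)) := by
    set F : ℕ → ℕ → ℝ := fun N j => if j ≤ N then r j * C (N - j) else 0 with hF
    have hFeq : ∀ N, ∑' j, F N j = ∑ j ∈ Finset.range (N + 1), r j * C (N - j) := by
      intro N
      rw [tsum_eq_sum (s := Finset.range (N + 1))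
        (fun j hj => by rw [hF]; simp only; rw [if_neg]; rw [Finset.mem_range] at hj; omega)]
      apply Finset.sum_congr rfl
      intro j hj
      rw [Finset.mem_range] at hj
      rw [hF]
      simp only
      rw [if_pos (by omega)]
    have hmain : Filter.Tendsto (fun N => ∑' j, F N j) Filter.atTop
        (nhds (∑' j, r j * L)) := by
      apply tendsto_tsum_of_dominated_convergence
        (bound := fun j => r j * (1 / (1 - lam * b))) (hr_summable.mul_right _)
      · intro j
        have h1 : Filter.Tendsto (fun N => C (N - j)) Filter.atTop (nhds L) :=
          hCL.comp (tendsto_sub_atTop_nat j)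
        have h2 := h1.const_mul (r j)
        apply h2.congr'
        filter_upwards [Filter.eventually_ge_atTop j] with N hN
        rw [hF]
        simp only
        rw [if_pos hN]
      · apply Filter.Eventually.of_forall
        intro N j
        rw [hF]
        simp only
        by_cases hj : j ≤ N
        · rw [if_pos hj, Real.norm_eq_abs,
            abs_of_nonneg (mul_nonneg (hr_nonneg j) (hC_nonneg _))]
          exact mul_le_mul_of_nonneg_left (hC_le _) (hr_nonneg j)
        · rw [if_neg hj]
          simp only [norm_zero]
          exact mul_nonneg (hr_nonneg j) (div_nonneg zero_le_one hone.le)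
    have htsL : ∑' j, r j * L = (lam * b) * L := by
      rw [tsum_mul_right, htsum_r]
    rw [htsL] at hmain
    apply hmain.congr
    intro N
    exact hFeq N
  have hLval : (1 - lam * b) * L = 1 := by
    have h1 : Filter.Tendsto (fun N => C N - ∑ j ∈ Finset.range (N + 1), r j * C (N - j))
        Filter.atTop (nhds (L - (lam * b) * L)) := hCL.sub hS_tend
    have h2 : Filter.Tendsto (fun N => C N - ∑ j ∈ Finset.range (N + 1), r j * C (N - j))
        Filter.atTop (nhds 1) := by
      have h3 : ∀ N, C N - ∑ j ∈ Finset.range (N + 1), r j * C (N - j)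
          = 1 - r N := by
        intro N
        have := hG4 N
        have hqr : ∑ i ∈ Finset.range (N + 1), q i = 1 - r N := by
          rw [hr]; simp only; ring
        linarith
      have h4 : Filter.Tendsto (fun N => 1 - r N) Filter.atTop (nhds (1 - 0)) :=
        tendsto_const_nhds.sub hr_to0
      rw [sub_zero] at h4
      exact h4.congr fun N => (h3 N).symm
    have := tendsto_nhds_unique h1 h2
    linarith
  -- identification of ET with b * C
  have hI4 : ∀ n, ∑ j ∈ Finset.range (n + 1), q j * c (n + 2 - j)
      = c (n + 1) - q (n + 1) - q (n + 1) * c 1 := by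
    intro n
    have hr0 : r 0 = 1 - q 0 := by rw [hr]; simp
    have hqr : ∀ j, q (j + 1) = r j - r (j + 1) := by
      intro j
      rw [hr]
      simp only
      rw [Finset.sum_range_succ (f := q) (j + 1)]
      ring
    -- split off j = 0
    rw [Finset.sum_range_succ' (fun j => q j * c (n + 2 - j)) n]
    have hsh : ∑ j ∈ Finset.range n, q (j + 1) * c (n + 2 - (j + 1))
        = (∑ j ∈ Finset.range n, r j * c (n + 1 - j))
          - ∑ j ∈ Finset.range n, r (j + 1) * c (n + 1 - j) := by
      rw [← Finset.sum_sub_distrib]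
      apply Finset.sum_congr rfl
      intro j _
      have he : n + 2 - (j + 1) = n + 1 - j := by omega
      rw [he, hqr j]
      ring
    have hS1 : ∑ j ∈ Finset.range n, r j * c (n + 1 - j)
        = c (n + 1) - q (n + 1) - r n * c 1 - r (n + 1) * c 0 := by
      have h4 := hI1 (n + 1)
      rw [Finset.sum_range_succ (fun j => r j * c (n + 1 - j)) (n + 1),
        Finset.sum_range_succ (fun j => r j * c (n + 1 - j)) n] at h4
      have e1 : n + 1 - (n + 1) = 0 := by omega
      have e2 : n + 1 - n = 1 := by omega
      rw [e1, e2] at h4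
      linarith
    have hS2 : ∑ j ∈ Finset.range n, r (j + 1) * c (n + 1 - j)
        = c (n + 2) - q (n + 2) - r 0 * c (n + 2) - r (n + 1) * c 1 - r (n + 2) * c 0 := by
      have h4 := hI1 (n + 2)
      rw [Finset.sum_range_succ' (fun j => r j * c (n + 2 - j)) (n + 2)] at h4
      have hsh2 : ∑ j ∈ Finset.range (n + 2), r (j + 1) * c (n + 2 - (j + 1))
          = ∑ j ∈ Finset.range (n + 2), r (j + 1) * c (n + 1 - j) :=
        Finset.sum_congr rfl fun j _ => by congr 2; omega
      rw [hsh2, Finset.sum_range_succ (fun j => r (j + 1) * c (n + 1 - j)) (n + 1),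
        Finset.sum_range_succ (fun j => r (j + 1) * c (n + 1 - j)) n] at h4
      have e1 : n + 1 - (n + 1) = 0 := by omega
      have e2 : n + 1 - n = 1 := by omega
      have e3 : n + 2 - 0 = n + 2 := by omega
      rw [e1, e2, e3] at h4
      linarith
    rw [hsh, hS1, hS2]
    have e4 : n + 2 - 0 = n + 2 := by omega
    rw [e4, hc0]
    have hq1 : q (n + 1) = r n - r (n + 1) := hqr n
    have hq2 : q (n + 2) = r (n + 1) - r (n + 2) := hqr (n + 1)
    linear_combination c 1 * hq1 + c (n + 2) * hr0 + hq2
  have hG10 : ∀ K, ∑ j ∈ Finset.range (K + 1), q j * C (K + 1 - j) = C K := by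
    intro K
    induction K with
    | zero =>
      simp only [zero_add, Finset.sum_range_one, Nat.sub_zero]
      have hc1 : q 0 * c 1 = q 1 + r 1 := by
        have h := hI1 1
        rw [Finset.sum_range_succ, Finset.sum_range_one] at h
        have hr0 : r 0 = 1 - q 0 := by rw [hr]; simp
        simp only [Nat.sub_zero, Nat.sub_self] at h
        rw [hc0, hr0] at h
        linear_combination h
      have hr1 : r 1 = 1 - (q 0 + q 1) := by
        show 1 - ∑ i ∈ Finset.range (1 + 1), q i = 1 - (q 0 + q 1)
        rw [Finset.sum_range_succ, Finset.sum_range_one]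
      rw [hC0, hC1]
      linear_combination hc1 + hr1
    | succ K ih =>
      rw [Finset.sum_range_succ (fun j => q j * C (K + 1 + 1 - j)) (K + 1)]
      have he1 : K + 1 + 1 - (K + 1) = 1 := by omega
      rw [he1]
      have hsplit : ∑ j ∈ Finset.range (K + 1), q j * C (K + 1 + 1 - j)
          = ∑ j ∈ Finset.range (K + 1), q j * C (K + 1 - j)
            + ∑ j ∈ Finset.range (K + 1), q j * c (K + 2 - j) := by
        rw [← Finset.sum_add_distrib]
        apply Finset.sum_congr rfl
        intro j hj
        rw [Finset.mem_range] at hj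
        have h1 : K + 1 + 1 - j = (K + 1 - j) + 1 := by omega
        rw [h1, hCsucc (K + 1 - j)]
        ring
      rw [hsplit, ih]
      have hI4' := hI4 K
      rw [hCsucc K, hC1]
      linear_combination hI4'
  have hETC : ∀ K, ET K = b * C K := by
    intro K
    induction K using Nat.strong_induction_on with
    | _ K ih =>
      match K with
      | 0 => rw [hET0, hC0]; ring
      | (K' + 1) =>
        have hK := hrec' K'
        rw [Finset.sum_range_succ' (fun j => q j * ET (K' - j + 1)) K'] at hK
        simp only [Nat.sub_zero] at hK
        have h1 : ∑ j ∈ Finset.range K', q (j + 1) * ET (K' - (j + 1) + 1)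
            = ∑ j ∈ Finset.range K', q (j + 1) * (b * C (K' - j)) := by
          apply Finset.sum_congr rfl
          intro j hj
          rw [Finset.mem_range] at hj
          have he : K' - (j + 1) + 1 = K' - j := by omega
          rw [he, ih (K' - j) (by omega)]
        rw [h1, ih K' (by omega)] at hK
        have hG := hG10 K'
        rw [Finset.sum_range_succ' (fun j => q j * C (K' + 1 - j)) K'] at hG
        simp only [Nat.sub_zero] at hG
        have h2 : ∑ j ∈ Finset.range K', q (j + 1) * C (K' + 1 - (j + 1))
            = ∑ j ∈ Finset.range K', q (j + 1) * C (K' - j) :=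
          Finset.sum_congr rfl fun j _ => by congr 2; omega
        rw [h2] at hG
        have hq0 : q 0 ≠ 0 := hq0_pos.ne'
        have hMul : q 0 * ET (K' + 1) = q 0 * (b * C (K' + 1)) := by
          have hbs : ∑ j ∈ Finset.range K', q (j + 1) * (b * C (K' - j))
              = b * ∑ j ∈ Finset.range K', q (j + 1) * C (K' - j) := by
            rw [Finset.mul_sum]
            exact Finset.sum_congr rfl fun j _ => by ring
          rw [hbs] at hK
          nlinarith [hK, hG]
        exact mul_left_cancel₀ hq0 hMul
  -- conclusion
  have hfinal : Filter.Tendsto ET Filter.atTop (nhds (b * L)) := by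
    apply Filter.Tendsto.congr (fun K => (hETC K).symm)
    exact hCL.const_mul b
  have hLeq : L = 1 / (1 - lam * b) := by
    field_simp at hLval ⊢
    linarith
  rw [hLeq] at hfinal
  convert hfinal using 2
  rw [div_eq_mul_one_div]
end

section
/- Let $(P_K)$ satisfy $P_K = \sum_{j=0}^K \pi_j P_{K-j+1}$, $P_0 = 1$, where $(\pi_j)$ is a probability distribution with $\pi_0 > 0$, mean $1$, and positive finite second factorial moment $\varrho_2$. Let $\zeta(N)$ be random variables with $\zeta(N)\to\infty$ a.s., $\zeta(N) \le c N$ for a constant $c$, and suppose $\mathbf{E}\zeta(N)/N$ converges. Then $\lim_{N\to\infty} \frac{\mathbf{E}[P_{\zeta(N)}]}{\mathbf{E}\zeta(N)} = \frac{2}{\varrho_2}$. -/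
open Filter Finset

noncomputable def tail' (f : ℕ → ℝ) (m : ℕ) : ℝ := ∑' j, if m < j then f j else 0

lemma summable_tail_ite (f : ℕ → ℝ) (hf : ∀ j, 0 ≤ f j) (hs : Summable f) (m : ℕ) :
    Summable (fun j => if m < j then f j else 0) :=
  Summable.of_nonneg_of_le (fun j => by split <;> simp [hf j]) (fun j => by split <;> simp [hf j]) hs

lemma hasSum_tail (f : ℕ → ℝ) (hs : Summable f) (m : ℕ) :
    HasSum (fun j => if m < j then f j else 0) (∑' j, f j - ∑ j ∈ range (m+1), f j) := by
  have hfin : HasSum (fun j => if j ≤ m then f j else 0) (∑ j ∈ range (m+1), f j) := by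
    have := hasSum_sum_of_ne_finset_zero (L := SummationFilter.unconditional ℕ) (s := range (m+1))
      (f := fun j => if j ≤ m then f j else 0) (by
        intro j hj
        simp only [mem_range, not_lt] at hj
        simp [Nat.not_le.mpr (Nat.lt_of_lt_of_le (Nat.lt_succ_self m) hj)])
    convert this using 2 with j
    simp only [mem_range, Nat.lt_succ_iff] at *
    simp_all
  have := hs.hasSum.sub hfin
  convert this using 2 with j
  · rfl
  by_cases h : m < j
  · simp [h, Nat.not_le.mpr h]
  · simp [h, Nat.not_lt.mp h]

lemma tail'_eq (f : ℕ → ℝ) (hs : Summable f) (m : ℕ) :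
    tail' f m = ∑' j, f j - ∑ j ∈ range (m+1), f j :=
  (hasSum_tail f hs m).tsum_eq

lemma tail'_nonneg (f : ℕ → ℝ) (hf : ∀ j, 0 ≤ f j) (m : ℕ) : 0 ≤ tail' f m :=
  tsum_nonneg (fun j => by split <;> simp [hf j])

lemma layer (f a : ℕ → ℝ) (hf : ∀ j, 0 ≤ f j) (hfs : Summable f)
    (ha : ∀ i, 0 ≤ a i)
    (hA : Summable (fun j => (∑ i ∈ range j, a i) * f j)) :
    HasSum (fun i => a i * tail' f i) (∑' j, (∑ i ∈ range j, a i) * f j) := by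
  set A : ℕ → ℝ := fun j => ∑ i ∈ range j, a i with hAdef
  set L := ∑' j, A j * f j with hL
  have hAmono : Monotone A := fun x y hxy =>
    Finset.sum_le_sum_of_subset_of_nonneg (Finset.range_subset_range.mpr hxy) (fun i _ _ => ha i)
  have hAnn : ∀ j, 0 ≤ A j := fun j => Finset.sum_nonneg (fun i _ => ha i)
  have hterm_nonneg : ∀ i, 0 ≤ a i * tail' f i :=
    fun i => mul_nonneg (ha i) (tail'_nonneg f hf i)
  have hsummin : ∀ n, Summable (fun j => A (min n j) * f j) := by
    intro n
    refine Summable.of_nonneg_of_le (fun j => mul_nonneg (hAnn _) (hf j)) (fun j => ?_) hA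
    exact mul_le_mul_of_nonneg_right (hAmono (min_le_right n j)) (hf j)
  have hS : ∀ n, ∑ i ∈ range n, a i * tail' f i = ∑' j, A (min n j) * f j := by
    intro n
    have h1 : ∀ i, a i * tail' f i = ∑' j, (if i < j then a i * f j else 0) := by
      intro i
      rw [tail', ← tsum_mul_left]
      congr 1; funext j; split <;> simp
    have hsumm2 : ∀ i, Summable (fun j => if i < j then a i * f j else 0) := by
      intro i
      have := (summable_tail_ite f hf hfs i).mul_left (a i)
      refine this.congr (fun j => ?_)
      split <;> simp
    calc ∑ i ∈ range n, a i * tail' f i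
        = ∑ i ∈ range n, ∑' j, (if i < j then a i * f j else 0) :=
          Finset.sum_congr rfl (fun i _ => h1 i)
      _ = ∑' j, ∑ i ∈ range n, (if i < j then a i * f j else 0) :=
          (Summable.tsum_finsetSum (fun i _ => hsumm2 i)).symm
      _ = ∑' j, A (min n j) * f j := by
          congr 1; funext j
          rw [← Finset.sum_filter]
          have : (range n).filter (· < j) = range (min n j) := by
            ext k; simp [Finset.mem_filter, Finset.mem_range, Nat.lt_min, and_comm]
          rw [this, ← Finset.sum_mul]
  have upper : ∀ n, (∑ i ∈ range n, a i * tail' f i) ≤ L := by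
    intro n
    rw [hS n]
    exact Summable.tsum_le_tsum
      (fun j => mul_le_mul_of_nonneg_right (hAmono (min_le_right n j)) (hf j))
      (hsummin n) hA
  have lower : ∀ n, ∑ j ∈ range n, A j * f j ≤ ∑ i ∈ range n, a i * tail' f i := by
    intro n
    rw [hS n]
    calc ∑ j ∈ range n, A j * f j = ∑ j ∈ range n, A (min n j) * f j := by
          refine Finset.sum_congr rfl (fun j hj => ?_)
          rw [min_eq_right (le_of_lt (Finset.mem_range.mp hj))]
      _ ≤ ∑' j, A (min n j) * f j :=
          Summable.sum_le_tsum (range n) (fun j _ => mul_nonneg (hAnn _) (hf j)) (hsummin n)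
  have hto : Tendsto (fun n => ∑ i ∈ range n, a i * tail' f i) atTop (nhds L) :=
    tendsto_of_tendsto_of_tendsto_of_le_of_le hA.hasSum.tendsto_sum_nat
      tendsto_const_nhds lower upper
  exact (hasSum_iff_tendsto_nat_of_nonneg hterm_nonneg L).mpr hto

noncomputable def renewal (f : ℕ → ℝ) : ℕ → ℝ
  | 0 => 1
  | (n+1) => ∑ i ∈ Finset.range (n+1), f (i+1) * renewal f (n - i)
decreasing_by exact Nat.lt_succ_of_le (Nat.sub_le n i)

lemma sum_range_ite' (G : ℕ → ℝ) (m n : ℕ) (h : m ≤ n) :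
    ∑ i ∈ range n, (if i < m then G i else 0) = ∑ i ∈ range m, G i := by
  rw [← Finset.sum_filter]
  congr 1
  ext k
  simp only [Finset.mem_filter, Finset.mem_range]
  omega

lemma tri_swap (F : ℕ → ℕ → ℝ) (n : ℕ) :
    ∑ j ∈ range n, ∑ i ∈ range (n - j), F j i
      = ∑ i ∈ range n, ∑ j ∈ range (n - i), F j i := by
  calc ∑ j ∈ range n, ∑ i ∈ range (n - j), F j i
      = ∑ j ∈ range n, ∑ i ∈ range n, (if i < n - j then F j i else 0) :=
        Finset.sum_congr rfl fun j _ =>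
          (sum_range_ite' (fun i => F j i) (n - j) n (Nat.sub_le n j)).symm
    _ = ∑ i ∈ range n, ∑ j ∈ range n, (if i < n - j then F j i else 0) := Finset.sum_comm
    _ = ∑ i ∈ range n, ∑ j ∈ range (n - i), F j i := by
        refine Finset.sum_congr rfl fun i hi => ?_
        rw [← sum_range_ite' (fun j => F j i) (n - i) n (Nat.sub_le n i)]
        refine Finset.sum_congr rfl fun j hj => ?_
        have hi' := Finset.mem_range.mp hi
        have hj' := Finset.mem_range.mp hj
        by_cases h : i < n - j
        · rw [if_pos h, if_pos (by omega)]
        · rw [if_neg h, if_neg (by omega)]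

lemma renewal_nonneg (f : ℕ → ℝ) (hf : ∀ i, 0 ≤ f i) : ∀ n, 0 ≤ renewal f n := by
  intro n
  induction n using Nat.strong_induction_on with
  | _ n ih =>
    cases n with
    | zero => rw [renewal]; norm_num
    | succ m =>
      rw [renewal]
      exact Finset.sum_nonneg fun i _ =>
        mul_nonneg (hf _) (ih _ (Nat.lt_succ_of_le (Nat.sub_le m i)))

lemma tailf_zero (f : ℕ → ℝ) (hf0 : f 0 = 0) (h1 : HasSum f 1) : tail' f 0 = 1 := by
  rw [tail'_eq f h1.summable 0, h1.tsum_eq]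
  simp [hf0]

lemma tailf_succ (f : ℕ → ℝ) (h1 : HasSum f 1) (m : ℕ) :
    tail' f (m+1) = tail' f m - f (m+1) := by
  rw [tail'_eq f h1.summable, tail'_eq f h1.summable, Finset.sum_range_succ]
  ring

lemma renewal_rec (f : ℕ → ℝ) (m : ℕ) :
    renewal f (m+1) = ∑ n ∈ range (m+1), renewal f n * f (m+1-n) := by
  rw [renewal, ← Finset.sum_range_reflect (fun n => renewal f n * f (m+1-n)) (m+1)]
  refine Finset.sum_congr rfl fun j hj => ?_
  have hj' := Finset.mem_range.mp hj
  have e1 : m + 1 - 1 - j = m - j := by omega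
  have e2 : m + 1 - (m - j) = j + 1 := by omega
  simp only [e1, e2]
  rw [mul_comm]

lemma key1 (f : ℕ → ℝ) (hf0 : f 0 = 0) (hf : ∀ i, 0 ≤ f i) (h1 : HasSum f 1) :
    ∀ m, ∑ n ∈ range (m+1), renewal f n * tail' f (m - n) = 1 := by
  intro m
  induction m with
  | zero => simp [renewal, tailf_zero f hf0 h1]
  | succ m ih =>
    rw [Finset.sum_range_succ]
    have hsplit : ∀ n ∈ range (m+1),
        renewal f n * tail' f (m+1-n)
          = renewal f n * tail' f (m-n) - renewal f n * f (m+1-n) := by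
      intro n hn
      have hn' := Finset.mem_range.mp hn
      have e : m + 1 - n = (m - n) + 1 := by omega
      rw [e, tailf_succ f h1, mul_sub, ← e]
    rw [Finset.sum_congr rfl hsplit, Finset.sum_sub_distrib, ih]
    have hre := renewal_rec f m
    have e3 : m + 1 - (m + 1) = 0 := by omega
    rw [e3, tailf_zero f hf0 h1, mul_one]
    linarith [hre]

lemma renewal_le_one (f : ℕ → ℝ) (hf0 : f 0 = 0) (hf : ∀ i, 0 ≤ f i) (h1 : HasSum f 1)
    (n : ℕ) : renewal f n ≤ 1 := by
  have hk := key1 f hf0 hf h1 n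
  have hle : renewal f n * tail' f (n - n)
      ≤ ∑ m ∈ range (n+1), renewal f m * tail' f (n - m) :=
    Finset.single_le_sum
      (f := fun m => renewal f m * tail' f (n - m))
      (fun m _ => mul_nonneg (renewal_nonneg f hf m) (tail'_nonneg f hf _))
      (Finset.self_mem_range_succ n)
  rw [hk] at hle
  simpa [Nat.sub_self, tailf_zero f hf0 h1] using hle

lemma key2 (f : ℕ → ℝ) (hf0 : f 0 = 0) (hf : ∀ i, 0 ≤ f i) (h1 : HasSum f 1) :
    ∀ M : ℕ,
    ∑ n ∈ range (M+1), renewal f n * (∑ k ∈ range (M-n+1), tail' f k) = (M+1 : ℝ) := by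
  intro M
  induction M with
  | zero => simp [renewal, tailf_zero f hf0 h1]
  | succ M ih =>
    rw [Finset.sum_range_succ]
    have hsplit : ∀ n ∈ range (M+1),
        renewal f n * (∑ k ∈ range (M+1-n+1), tail' f k)
          = renewal f n * (∑ k ∈ range (M-n+1), tail' f k)
            + renewal f n * tail' f (M+1-n) := by
      intro n hn
      have hn' := Finset.mem_range.mp hn
      have e : M + 1 - n + 1 = (M - n + 1) + 1 := by omega
      have e2 : M - n + 1 = M + 1 - n := by omega
      rw [e, Finset.sum_range_succ, mul_add, e2]
    rw [Finset.sum_congr rfl hsplit, Finset.sum_add_distrib, ih]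
    have hk := key1 f hf0 hf h1 (M+1)
    rw [Finset.sum_range_succ] at hk
    have e3 : M + 1 - (M + 1) = 0 := by omega
    rw [e3] at hk ⊢
    rw [Finset.sum_range_one]
    push_cast
    linarith [hk]

lemma key3 (f : ℕ → ℝ) (hf0 : f 0 = 0) (hf : ∀ i, 0 ≤ f i) (h1 : HasSum f 1)
    (μ : ℝ) (hT : HasSum (tail' f) μ) (M : ℕ) :
    (M+1 : ℝ) ≤ μ * ∑ n ∈ range (M+1), renewal f n := by
  rw [← key2 f hf0 hf h1 M, Finset.mul_sum]
  refine Finset.sum_le_sum fun n _ => ?_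
  rw [mul_comm μ]
  exact mul_le_mul_of_nonneg_left
    (sum_le_hasSum (range (M-n+1)) (fun k _ => tail'_nonneg f hf k) hT)
    (renewal_nonneg f hf n)

lemma key4 (f : ℕ → ℝ) (hf0 : f 0 = 0) (hf : ∀ i, 0 ≤ f i) (h1 : HasSum f 1)
    (L M : ℕ) (hLM : L ≤ M) :
    (∑ k ∈ range (L+1), tail' f k) * ((∑ n ∈ range (M+1), renewal f n) - L)
      ≤ (M+1 : ℝ) := by
  set HL := ∑ k ∈ range (L+1), tail' f k with hHL
  have hHLnn : 0 ≤ HL := Finset.sum_nonneg fun k _ => tail'_nonneg f hf k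
  have hsplit : ∑ n ∈ range (M+1), renewal f n
      = ∑ n ∈ range (M-L+1), renewal f n + ∑ i ∈ range L, renewal f (M-L+1+i) := by
    have e : M - L + 1 + L = M + 1 := by omega
    rw [← e, Finset.sum_range_add]
  have htail : ∑ i ∈ range L, renewal f (M-L+1+i) ≤ L := by
    calc ∑ i ∈ range L, renewal f (M-L+1+i)
        ≤ ∑ _i ∈ range L, (1:ℝ) :=
          Finset.sum_le_sum fun i _ => renewal_le_one f hf0 hf h1 _
      _ = L := by simp
  have h2 : HL * (∑ n ∈ range (M-L+1), renewal f n)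
      ≤ ∑ n ∈ range (M-L+1), renewal f n * (∑ k ∈ range (M-n+1), tail' f k) := by
    rw [Finset.mul_sum]
    refine Finset.sum_le_sum fun n hn => ?_
    have hn' := Finset.mem_range.mp hn
    rw [mul_comm]
    refine mul_le_mul_of_nonneg_left ?_ (renewal_nonneg f hf n)
    exact Finset.sum_le_sum_of_subset_of_nonneg
      (Finset.range_subset_range.mpr (by omega)) (fun k _ _ => tail'_nonneg f hf k)
  have h3 : ∑ n ∈ range (M-L+1), renewal f n * (∑ k ∈ range (M-n+1), tail' f k)
      ≤ ∑ n ∈ range (M+1), renewal f n * (∑ k ∈ range (M-n+1), tail' f k) :=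
    Finset.sum_le_sum_of_subset_of_nonneg (Finset.range_subset_range.mpr (by omega))
      (fun n _ _ => mul_nonneg (renewal_nonneg f hf n)
        (Finset.sum_nonneg fun k _ => tail'_nonneg f hf k))
  have h4 := key2 f hf0 hf h1 M
  have h5 : HL * ((∑ n ∈ range (M+1), renewal f n) - L)
      ≤ HL * (∑ n ∈ range (M-L+1), renewal f n) := by
    refine mul_le_mul_of_nonneg_left ?_ hHLnn
    rw [hsplit]
    linarith [htail]
  linarith

lemma key5 (f : ℕ → ℝ) (hf0 : f 0 = 0) (hf : ∀ i, 0 ≤ f i) (h1 : HasSum f 1)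
    (μ : ℝ) (hT : HasSum (tail' f) μ) :
    Tendsto (fun M : ℕ => (∑ n ∈ range (M+1), renewal f n) / (M+1)) atTop
      (nhds (1/μ)) := by
  have hT0 : tail' f 0 = 1 := tailf_zero f hf0 h1
  have hμ1 : 1 ≤ μ := by
    have := le_hasSum hT 0 (fun k _ => tail'_nonneg f hf k)
    rwa [hT0] at this
  have hμpos : 0 < μ := lt_of_lt_of_le one_pos hμ1
  have hHH : ∀ L, 1 ≤ ∑ k ∈ range (L+1), tail' f k := by
    intro L
    have := Finset.single_le_sum (f := fun k => tail' f k)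
      (fun k _ => tail'_nonneg f hf k) (Finset.mem_range.mpr (Nat.succ_pos L))
    rwa [hT0] at this
  rw [Metric.tendsto_atTop]
  intro ε hε
  -- choose L
  have hHHto : Tendsto (fun L => ∑ k ∈ range (L+1), tail' f k) atTop (nhds μ) :=
    hT.tendsto_sum_nat.comp (tendsto_add_atTop_nat 1)
  have hinv : Tendsto (fun L => 1 / (∑ k ∈ range (L+1), tail' f k)) atTop
      (nhds (1/μ)) :=
    tendsto_const_nhds.div hHHto (ne_of_gt hμpos)
  have hev : ∀ᶠ L in atTop,
      1 / (∑ k ∈ range (L+1), tail' f k) < 1/μ + ε/2 := by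
    have := hinv.eventually (gt_mem_nhds (lt_add_of_pos_right (1/μ) (half_pos hε)))
    exact this
  obtain ⟨L, hL⟩ := hev.exists
  set HL := ∑ k ∈ range (L+1), tail' f k with hHLdef
  have hHLpos : (0:ℝ) < HL := lt_of_lt_of_le one_pos (hHH L)
  obtain ⟨M₀, hM₀⟩ : ∃ M₀ : ℕ, L ≤ M₀ ∧ (2*L/ε : ℝ) ≤ M₀ := by
    obtain ⟨m, hm⟩ := exists_nat_ge (2*L/ε : ℝ)
    exact ⟨max L m, le_max_left _ _,
      le_trans hm (by exact_mod_cast Nat.le_max_right L m)⟩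
  refine ⟨M₀, fun M hM => ?_⟩
  have hLM : L ≤ M := le_trans hM₀.1 hM
  have hM1 : (0:ℝ) < M + 1 := by positivity
  set a := ∑ n ∈ range (M+1), renewal f n with hadef
  have hlow : 1/μ ≤ a / (M+1) := by
    rw [div_le_div_iff₀ hμpos hM1]
    have := key3 f hf0 hf h1 μ hT M
    linarith
  have hup : a / (M+1) ≤ 1/HL + L/(M+1) := by
    have hk4 := key4 f hf0 hf h1 L M hLM
    have h6 : a - L ≤ (M+1)/HL := by
      rw [le_div_iff₀ hHLpos]
      linarith
    rw [div_le_iff₀ hM1]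
    have : (1/HL + L/(M+1)) * (M+1) = (M+1)/HL + L := by
      field_simp
    rw [this]
    linarith
  have hLb : (L:ℝ)/(M+1) < ε/2 := by
    rw [div_lt_iff₀ hM1]
    have hMge : (2*L/ε : ℝ) ≤ M := le_trans hM₀.2 (by exact_mod_cast hM)
    have h7 : (2*L : ℝ) ≤ ε * M := by
      rw [div_le_iff₀ hε] at hMge
      linarith
    nlinarith
  rw [Real.dist_eq, abs_of_nonneg (by linarith)]
  linarith

open MeasureTheory ProbabilityTheory Filter

theorem stmt12 (π P : ℕ → ℝ)
    (hπ_nonneg : ∀ j, 0 ≤ π j) (hπ_sum : ∑' j, π j = 1) (hπ0 : 0 < π 0)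
    (hmean_summable : Summable (fun j : ℕ => (j : ℝ) * π j))
    (hmean : ∑' j : ℕ, (j : ℝ) * π j = 1)
    (hsec_summable : Summable (fun j : ℕ => (j : ℝ) * ((j : ℝ) - 1) * π j))
    (hsec_pos : 0 < ∑' j : ℕ, (j : ℝ) * ((j : ℝ) - 1) * π j)
    (hP0 : P 0 = 1)
    (hrec : ∀ K, P K = ∑ j ∈ Finset.range (K + 1), π j * P (K - j + 1))
    (Ω : Type*) [MeasureSpace Ω] [IsProbabilityMeasure (ℙ : Measure Ω)]
    (ζ : ℕ → Ω → ℕ) (hζ_meas : ∀ N, Measurable (ζ N))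
    (hζ_tendsto : ∀ᵐ ω, Tendsto (fun N => ζ N ω) atTop atTop)
    (c : ℝ) (hζ_bdd : ∀ N ω, (ζ N ω : ℝ) ≤ c * N)
    (hEζ_conv : ∃ L : ℝ, Tendsto (fun N => (∫ ω, (ζ N ω : ℝ)) / N) atTop (nhds L)) :
    Tendsto (fun N => (∫ ω, P (ζ N ω)) / ∫ ω, (ζ N ω : ℝ)) atTop
      (nhds (2 / ∑' j : ℕ, (j : ℝ) * ((j : ℝ) - 1) * π j)) := by
  set ρ2 : ℝ := ∑' j : ℕ, (j : ℝ) * ((j : ℝ) - 1) * π j with hρ2def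
  have hπ0' : π 0 ≠ 0 := ne_of_gt hπ0
  have hρ2ne : ρ2 ≠ 0 := ne_of_gt hsec_pos
  have hπ_summable : Summable π := by
    by_contra h
    rw [tsum_eq_zero_of_not_summable h] at hπ_sum
    norm_num at hπ_sum
  -- the tail sequence g of π
  set g : ℕ → ℝ := tail' π with hgdef
  have hgnonneg : ∀ i, 0 ≤ g i := fun i => tail'_nonneg π hπ_nonneg i
  have e1 : ∀ j : ℕ, (∑ _i ∈ Finset.range j, (1:ℝ)) = (j:ℝ) := fun j => by simp
  have e2 : ∀ j : ℕ, (∑ i ∈ Finset.range j, (i:ℝ)) = (j:ℝ) * ((j:ℝ) - 1) / 2 := by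
    intro j
    induction j with
    | zero => simp
    | succ m ih => rw [Finset.sum_range_succ, ih]; push_cast; ring
  have hg1 : HasSum g 1 := by
    have hA : Summable (fun j => (∑ _i ∈ Finset.range j, (1:ℝ)) * π j) :=
      hmean_summable.congr (fun j => by rw [e1])
    have h := layer π (fun _ => 1) hπ_nonneg hπ_summable (fun _ => zero_le_one) hA
    have hval : (∑' j, (∑ _i ∈ Finset.range j, (1:ℝ)) * π j) = 1 := by
      rw [show (fun j => (∑ _i ∈ Finset.range j, (1:ℝ)) * π j)
          = fun j : ℕ => (j:ℝ) * π j from funext fun j => by rw [e1]]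
      exact hmean
    rw [hval] at h
    simpa using h
  have hg2 : HasSum (fun i : ℕ => (i:ℝ) * g i) (ρ2 / 2) := by
    have hA : Summable (fun j => (∑ i ∈ Finset.range j, (i:ℝ)) * π j) := by
      refine (hsec_summable.div_const 2).congr (fun j => ?_)
      rw [e2]; ring
    have h := layer π (fun i => (i:ℝ)) hπ_nonneg hπ_summable (fun i => Nat.cast_nonneg i) hA
    have hval : (∑' j, (∑ i ∈ Finset.range j, (i:ℝ)) * π j) = ρ2 / 2 := by
      rw [show (fun j => (∑ i ∈ Finset.range j, (i:ℝ)) * π j)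
          = fun j : ℕ => ((j:ℝ) * ((j:ℝ) - 1) * π j) / 2 from funext fun j => by rw [e2]; ring]
      rw [tsum_div_const]
    rw [hval] at h
    exact h
  have hg0 : g 0 = 1 - π 0 := by
    rw [hgdef, tail'_eq π hπ_summable 0, hπ_sum]
    simp
  -- the normalized step distribution
  set fh : ℕ → ℝ := fun i => if i = 0 then (0:ℝ) else g i / π 0 with hfhdef
  have hfh0 : fh 0 = 0 := by simp [hfhdef]
  have hfhnn : ∀ i, 0 ≤ fh i := by
    intro i
    by_cases h : i = 0 <;> simp [hfhdef, h]
    exact div_nonneg (hgnonneg i) (le_of_lt hπ0)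
  have hfh1 : HasSum fh 1 := by
    have h := (hg1.sub (hasSum_ite_eq 0 (g 0))).div_const (π 0)
    have hfun : (fun i => (g i - if i = 0 then g 0 else 0) / π 0) = fh := by
      funext i
      by_cases hi : i = 0
      · subst hi; simp [hfhdef]
      · simp [hfhdef, hi]
    have hval : (1 - g 0) / π 0 = 1 := by
      rw [hg0]; field_simp; ring
    rw [hfun, hval] at h
    exact h
  have hifh : HasSum (fun i : ℕ => (i:ℝ) * fh i) (ρ2 / (2 * π 0)) := by
    have h := hg2.div_const (π 0)
    have hfun : (fun i : ℕ => ((i:ℝ) * g i) / π 0) = fun i : ℕ => (i:ℝ) * fh i := by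
      funext i
      by_cases hi : i = 0
      · subst hi; simp
      · simp [hfhdef, hi]; ring
    have hval : ρ2 / 2 / π 0 = ρ2 / (2 * π 0) := by rw [div_div]
    rw [hfun, hval] at h
    exact h
  set μ : ℝ := ρ2 / (2 * π 0) with hμdef
  have hT : HasSum (tail' fh) μ := by
    have hA : Summable (fun j => (∑ _i ∈ Finset.range j, (1:ℝ)) * fh j) :=
      hifh.summable.congr (fun j => by rw [e1])
    have h := layer fh (fun _ => 1) hfhnn hfh1.summable (fun _ => zero_le_one) hA
    have hval : (∑' j, (∑ _i ∈ Finset.range j, (1:ℝ)) * fh j) = μ := by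
      rw [show (fun j => (∑ _i ∈ Finset.range j, (1:ℝ)) * fh j)
          = fun j : ℕ => (j:ℝ) * fh j from funext fun j => by rw [e1]]
      exact hifh.tsum_eq
    rw [hval] at h
    simpa using h
  have hN : Tendsto (fun M : ℕ => (∑ n ∈ Finset.range (M+1), renewal fh n) / (M+1)) atTop
      (nhds (1/μ)) := key5 fh hfh0 hfhnn hfh1 μ hT
  have hR0 : renewal fh 0 = 1 := by rw [renewal]
  -- the partial-sum identity (star)
  have hπpartial : ∀ m : ℕ, (∑ j ∈ Finset.range (m+1), π j) = 1 - g m := by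
    intro m
    have := tail'_eq π hπ_summable m
    rw [hπ_sum] at this
    rw [hgdef]
    linarith
  have hgfh : ∀ m : ℕ, 1 ≤ m → g m = π 0 * fh m := by
    intro m hm
    have : m ≠ 0 := by omega
    rw [hfhdef]
    simp only [this, if_false]
    field_simp
  have hstar : ∀ K : ℕ, 1 ≤ K →
      (∑ j ∈ Finset.range (K+1), π j * (∑ n ∈ Finset.range (K-j+1), renewal fh n))
        = ∑ n ∈ Finset.range (K-1+1), renewal fh n := by
    intro K hK
    have step1 : (∑ j ∈ Finset.range (K+1), π j * (∑ n ∈ Finset.range (K-j+1), renewal fh n))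
        = ∑ j ∈ Finset.range (K+1), ∑ n ∈ Finset.range ((K+1)-j), π j * renewal fh n := by
      refine Finset.sum_congr rfl fun j hj => ?_
      have hj' := Finset.mem_range.mp hj
      have e : K - j + 1 = K + 1 - j := by omega
      rw [Finset.mul_sum, e]
    have step2 := tri_swap (fun j n => π j * renewal fh n) (K+1)
    have step3 : (∑ n ∈ Finset.range (K+1), ∑ j ∈ Finset.range ((K+1)-n), π j * renewal fh n)
        = ∑ n ∈ Finset.range (K+1), renewal fh n * (1 - g (K-n)) := by
      refine Finset.sum_congr rfl fun n hn => ?_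
      have hn' := Finset.mem_range.mp hn
      have e : K + 1 - n = (K - n) + 1 := by omega
      rw [e, ← Finset.sum_mul, hπpartial (K-n), mul_comm]
    have step4 : (∑ n ∈ Finset.range (K+1), renewal fh n * g (K-n)) = renewal fh K := by
      rw [Finset.sum_range_succ, Nat.sub_self, hg0]
      have step4a : (∑ n ∈ Finset.range K, renewal fh n * g (K-n))
          = π 0 * ∑ n ∈ Finset.range K, renewal fh n * fh (K-n) := by
        rw [Finset.mul_sum]
        refine Finset.sum_congr rfl fun n hn => ?_
        have hn' := Finset.mem_range.mp hn
        rw [hgfh (K-n) (by omega)]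
        ring
      have step4b : (∑ n ∈ Finset.range K, renewal fh n * fh (K-n)) = renewal fh K := by
        have := renewal_rec fh (K-1)
        have eK : K - 1 + 1 = K := by omega
        rw [eK] at this
        rw [← this]
      rw [step4a, step4b]
      ring
    calc (∑ j ∈ Finset.range (K+1), π j * (∑ n ∈ Finset.range (K-j+1), renewal fh n))
        = ∑ n ∈ Finset.range (K+1), renewal fh n * (1 - g (K-n)) := by
          rw [step1, step2, step3]
      _ = (∑ n ∈ Finset.range (K+1), renewal fh n)
            - ∑ n ∈ Finset.range (K+1), renewal fh n * g (K-n) := by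
          rw [← Finset.sum_sub_distrib]
          exact Finset.sum_congr rfl fun n _ => by ring
      _ = ∑ n ∈ Finset.range (K-1+1), renewal fh n := by
          rw [step4]
          have eK : K - 1 + 1 = K := by omega
          rw [eK, Finset.sum_range_succ]
          ring
  -- identification of P with the renewal partial sums
  set Q : ℕ → ℝ := fun K => if K = 0 then 1 else (∑ n ∈ Finset.range (K-1+1), renewal fh n) / π 0
    with hQdef
  have hQrec : ∀ K, Q K = ∑ j ∈ Finset.range (K + 1), π j * Q (K - j + 1) := by
    intro K
    have hQval : ∀ j ∈ Finset.range (K+1),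
        π j * Q (K - j + 1) = π j * ((∑ n ∈ Finset.range (K-j+1), renewal fh n) / π 0) := by
      intro j hj
      congr 1
    rw [Finset.sum_congr rfl hQval]
    rcases Nat.eq_zero_or_pos K with hK | hK
    · subst hK
      rw [Finset.sum_range_one]
      simp [hQdef, hR0, hπ0']
    · have : (∑ j ∈ Finset.range (K+1),
          π j * ((∑ n ∈ Finset.range (K-j+1), renewal fh n) / π 0))
          = (∑ j ∈ Finset.range (K+1),
            π j * (∑ n ∈ Finset.range (K-j+1), renewal fh n)) / π 0 := by
        rw [Finset.sum_div]
        exact Finset.sum_congr rfl fun j _ => by ring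
      rw [this, hstar K hK, hQdef]
      simp only [Nat.pos_iff_ne_zero.mp hK, if_false]
  have hPQ : ∀ K, P K = Q K := by
    intro K
    induction K using Nat.strong_induction_on with
    | _ K ih =>
      cases K with
      | zero => rw [hP0, hQdef]; simp
      | succ m =>
        have h1 := hrec m
        have h2 := hQrec m
        rw [Finset.sum_range_succ'] at h1 h2
        have hcongr : ∀ i ∈ Finset.range m,
            π (i+1) * P (m - (i+1) + 1) = π (i+1) * Q (m - (i+1) + 1) := by
          intro i hi
          have hi' := Finset.mem_range.mp hi
          rw [ih (m - (i+1) + 1) (by omega)]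
        rw [Finset.sum_congr rfl hcongr] at h1
        have hm : P m = Q m := ih m (by omega)
        have e : m - 0 + 1 = m + 1 := by omega
        rw [e] at h1 h2
        have : π 0 * P (m+1) = π 0 * Q (m+1) := by linarith
        exact mul_left_cancel₀ hπ0' this
  -- limit of P K / K
  have hμpos : 0 < μ := by
    rw [hμdef]
    positivity
  have hval2 : (1/μ) / π 0 = 2 / ρ2 := by
    rw [hμdef]
    field_simp
  have hPlim : Tendsto (fun K : ℕ => P K / K) atTop (nhds (2 / ρ2)) := by
    have hcomp : Tendsto (fun K : ℕ =>
        ((∑ n ∈ Finset.range ((K-1)+1), renewal fh n) / ((K-1 : ℕ)+1)) / π 0) atTop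
        (nhds ((1/μ) / π 0)) :=
      (hN.comp (tendsto_sub_atTop_nat 1)).div_const (π 0)
    rw [hval2] at hcomp
    refine hcomp.congr' ?_
    filter_upwards [eventually_ge_atTop 1] with K hK
    have hKne : K ≠ 0 := by omega
    rw [hPQ K, hQdef]
    simp only [hKne, if_false]
    have ecast : ((K-1 : ℕ) : ℝ) + 1 = (K : ℝ) := by
      have : (K - 1 : ℕ) + 1 = K := by omega
      exact_mod_cast congrArg (Nat.cast : ℕ → ℝ) this
    rw [ecast]
    rw [div_div, div_div, mul_comm]
  -- approximation of P by the linear function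
  set l : ℝ := 2 / ρ2 with hldef
  have happrox : ∀ ε : ℝ, 0 < ε → ∃ C : ℝ, 0 ≤ C ∧ ∀ K : ℕ, |P K - l * K| ≤ ε * K + C := by
    intro ε hε
    rw [Metric.tendsto_atTop] at hPlim
    obtain ⟨K₀, hK₀⟩ := hPlim ε hε
    set K₁ := max K₀ 1 with hK₁def
    refine ⟨∑ k ∈ Finset.range K₁, |P k - l * k|, Finset.sum_nonneg fun k _ => abs_nonneg _, ?_⟩
    intro K
    rcases lt_or_ge K K₁ with h | h
    · have : |P K - l * K| ≤ ∑ k ∈ Finset.range K₁, |P k - l * k| :=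
        Finset.single_le_sum (f := fun k => |P k - l * (k:ℝ)|)
          (fun k _ => abs_nonneg _) (Finset.mem_range.mpr h)
      have hKnn : (0:ℝ) ≤ ε * K := by positivity
      linarith
    · have hK1 : 1 ≤ K := le_trans (le_max_right K₀ 1) h
      have hKpos : (0:ℝ) < K := by exact_mod_cast hK1
      have hd := hK₀ K (le_trans (le_max_left K₀ 1) h)
      rw [Real.dist_eq] at hd
      have hKne : (K:ℝ) ≠ 0 := ne_of_gt hKpos
      have : P K - l * K = (P K / K - l) * K := by
        rw [sub_mul, div_mul_cancel₀ _ hKne]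
      rw [this, abs_mul, abs_of_pos hKpos]
      have : |P (K:ℕ) / (K:ℝ) - l| * (K:ℝ) ≤ ε * K :=
        mul_le_mul_of_nonneg_right (le_of_lt hd) (le_of_lt hKpos)
      have hCnn : (0:ℝ) ≤ ∑ k ∈ Finset.range K₁, |P k - l * k| :=
        Finset.sum_nonneg fun k _ => abs_nonneg _
      linarith
  -- integrability
  have hmeasP : ∀ N, AEStronglyMeasurable (fun ω => P (ζ N ω)) (ℙ : Measure Ω) := by
    intro N
    exact (Measurable.comp (measurable_from_top (f := P)) (hζ_meas N)).aestronglyMeasurable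
  have hmeasζ : ∀ N, AEStronglyMeasurable (fun ω => (ζ N ω : ℝ)) (ℙ : Measure Ω) := by
    intro N
    exact (Measurable.comp (measurable_from_top (f := fun n : ℕ => (n:ℝ))) (hζ_meas N)).aestronglyMeasurable
  have hintζ : ∀ N, Integrable (fun ω => (ζ N ω : ℝ)) (ℙ : Measure Ω) := by
    intro N
    refine Integrable.mono' (integrable_const (c * N)) (hmeasζ N) ?_
    filter_upwards with ω
    rw [Real.norm_eq_abs, abs_of_nonneg (by positivity)]
    exact hζ_bdd N ω
  obtain ⟨C₀, hC₀nn, hC₀⟩ := happrox 1 one_pos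
  have hlinP : ∀ K : ℕ, |P K| ≤ (1 + |l| + C₀) * (K + 1) := by
    intro K
    have h1 := hC₀ K
    have h2 : |P K| ≤ |P K - l * K| + |l| * K := by
      have := abs_add_le (P K - l * K) (l * K)
      rw [sub_add_cancel] at this
      calc |P K| ≤ |P K - l * K| + |l * K| := this
        _ = |P K - l * K| + |l| * K := by rw [abs_mul, Nat.abs_cast]
    have hK : (0:ℝ) ≤ K := Nat.cast_nonneg K
    have hl : (0:ℝ) ≤ |l| := abs_nonneg l
    nlinarith
  have hintP : ∀ N, Integrable (fun ω => P (ζ N ω)) (ℙ : Measure Ω) := by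
    intro N
    refine Integrable.mono' (integrable_const ((1 + |l| + C₀) * (c * N + 1))) (hmeasP N) ?_
    filter_upwards with ω
    rw [Real.norm_eq_abs]
    calc |P (ζ N ω)| ≤ (1 + |l| + C₀) * ((ζ N ω : ℝ) + 1) := hlinP _
      _ ≤ (1 + |l| + C₀) * (c * N + 1) := by
          have := hζ_bdd N ω
          have h0 : (0:ℝ) ≤ 1 + |l| + C₀ := by positivity
          nlinarith
  -- the mean of ζ tends to infinity
  have hEζ_inf : Tendsto (fun N => ∫ ω, (ζ N ω : ℝ)) atTop atTop := by
    rw [tendsto_atTop]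
    intro b
    set B : ℝ := max b 0 + 1 with hBdef
    have hBpos : 0 < B := by positivity
    have hmin_meas : ∀ N, AEStronglyMeasurable (fun ω => min ((ζ N ω : ℝ)) B) (ℙ : Measure Ω) :=
      fun N => (hmeasζ N).inf aestronglyMeasurable_const
    have hDCT : Tendsto (fun N => ∫ ω, min ((ζ N ω : ℝ)) B) atTop (nhds (∫ (_ : Ω), B)) := by
      refine tendsto_integral_of_dominated_convergence (fun _ => B) hmin_meas
        (integrable_const B) ?_ ?_
      · intro N
        filter_upwards with ω
        rw [Real.norm_eq_abs, abs_of_nonneg (le_min (by positivity) (le_of_lt hBpos))]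
        exact min_le_right _ _
      · filter_upwards [hζ_tendsto] with ω hω
        have : ∀ᶠ N in atTop, min ((ζ N ω : ℝ)) B = B := by
          have hten : Tendsto (fun N => (ζ N ω : ℝ)) atTop atTop :=
            tendsto_natCast_atTop_atTop.comp hω
          filter_upwards [hten.eventually_ge_atTop B] with N hN
          exact min_eq_right hN
        exact Tendsto.congr' (Filter.EventuallyEq.symm this) tendsto_const_nhds
    rw [integral_const] at hDCT
    simp only [probReal_univ, one_smul] at hDCT
    have hintmin : ∀ N, Integrable (fun ω => min ((ζ N ω : ℝ)) B) (ℙ : Measure Ω) := by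
      intro N
      refine Integrable.mono' (integrable_const B) (hmin_meas N) ?_
      filter_upwards with ω
      rw [Real.norm_eq_abs, abs_of_nonneg (le_min (by positivity) (le_of_lt hBpos))]
      exact min_le_right _ _
    have hev : ∀ᶠ N in atTop, B - 1 ≤ ∫ ω, min ((ζ N ω : ℝ)) B :=
      hDCT.eventually (eventually_ge_nhds (by linarith : B - 1 < B))
    filter_upwards [hev] with N hN
    have hmono : (∫ ω, min ((ζ N ω : ℝ)) B) ≤ ∫ ω, (ζ N ω : ℝ) :=
      integral_mono (hintmin N) (hintζ N) (fun ω => min_le_left _ _)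
    have : b ≤ B - 1 := by rw [hBdef]; simp [le_max_left]
    linarith
  -- final assembly
  rw [hρ2def] at *
  rw [Metric.tendsto_atTop]
  intro ε hε
  obtain ⟨C, hCnn, hC⟩ := happrox (ε/2) (half_pos hε)
  set D : ℝ := max 1 (2*C/ε + 1) with hDdef
  have hDpos : (0:ℝ) < D := lt_of_lt_of_le one_pos (le_max_left _ _)
  have hev := (hEζ_inf.eventually_ge_atTop D).and (hEζ_inf.eventually_ge_atTop 1)
  rw [eventually_atTop] at hev
  obtain ⟨N₀, hN₀⟩ := hev
  refine ⟨N₀, fun N hN => ?_⟩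
  obtain ⟨hID, hI1⟩ := hN₀ N hN
  set I : ℝ := ∫ ω, (ζ N ω : ℝ) with hIdef
  have hIpos : (0:ℝ) < I := lt_of_lt_of_le one_pos hI1
  -- bound |∫ P∘ζ - l * I|
  have hintlζ : Integrable (fun ω => l * (ζ N ω : ℝ)) (ℙ : Measure Ω) :=
    (hintζ N).const_mul l
  have hintsub : Integrable (fun ω => P (ζ N ω) - l * (ζ N ω : ℝ)) (ℙ : Measure Ω) :=
    (hintP N).sub hintlζ
  have hintbnd : Integrable (fun ω => ε/2 * (ζ N ω : ℝ) + C) (ℙ : Measure Ω) :=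
    ((hintζ N).const_mul (ε/2)).add (integrable_const C)
  have hbound : |(∫ ω, P (ζ N ω)) - l * I| ≤ ε/2 * I + C := by
    have h1 : (∫ ω, P (ζ N ω)) - l * I = ∫ ω, (P (ζ N ω) - l * (ζ N ω : ℝ)) := by
      rw [integral_sub (hintP N) hintlζ, integral_const_mul]
    rw [h1]
    calc |∫ ω, (P (ζ N ω) - l * (ζ N ω : ℝ))|
        ≤ ∫ ω, |P (ζ N ω) - l * (ζ N ω : ℝ)| := by
          simpa [Real.norm_eq_abs] using
            norm_integral_le_integral_norm (fun ω => P (ζ N ω) - l * (ζ N ω : ℝ))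
      _ ≤ ∫ ω, (ε/2 * (ζ N ω : ℝ) + C) := by
          refine integral_mono hintsub.abs hintbnd (fun ω => ?_)
          exact hC (ζ N ω)
      _ = ε/2 * I + C := by
          rw [integral_add ((hintζ N).const_mul (ε/2)) (integrable_const C),
            integral_const_mul, integral_const]
          simp [measure_univ, hIdef]
  have hsplit : (∫ ω, P (ζ N ω)) / I - l = ((∫ ω, P (ζ N ω)) - l * I) / I := by
    field_simp
  rw [Real.dist_eq, hsplit, abs_div, abs_of_pos hIpos]
  have hstep : |(∫ ω, P (ζ N ω)) - l * I| / I ≤ ε/2 + C/I := by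
    rw [div_le_iff₀ hIpos]
    have : (ε/2 + C/I) * I = ε/2 * I + C := by
      field_simp
    rw [this]
    exact hbound
  have hCI : C / I < ε/2 := by
    have hD2 : 2*C/ε + 1 ≤ I := le_trans (le_max_right _ _) hID
    have h1 : C / I ≤ C / (2*C/ε + 1) := by
      apply div_le_div_of_nonneg_left hCnn ?_ hD2
      positivity
    have h2 : C / (2*C/ε + 1) < ε / 2 := by
      rw [div_lt_iff₀ (by positivity)]
      have : ε / 2 * (2 * C / ε + 1) = C + ε/2 := by
        field_simp
      rw [this]
      linarith
    linarith
  linarith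
end
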